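/- Suppose the system {F_i}_{i=0}^{n} is linearly independent as functions on [0,1] (i.e., if ∑_{i=0}^{n} c_i F_i(t) = 0 for all t ∈ [0,1] then all c_i = 0), that F_0(0) = 1, F_i(0) = 0 for i = 1,…,n, F_n(1) = 1, F_i(1) = 0 for i = 0,…,n−1, and that φ(0) = 0 and φ(1) = 1. Then for every σ ∈ (0,1], the system {T_i}_{i=0}^{n} is linearly independent as functions on [0,1]: if ∑_{i=0}^{n} c_i T_i(t) = 0 for all t ∈ [0,1], then c_i = 0 for all i = 0,…,n. -/

import Mathlib

theorem stmt_5 (n : ℕ) (hn : 1 ≤ n) (F T : ℕ → ℝ → ℝ) (φ : ℝ → ℝ)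
    (σ : ℝ) (hσ : σ ∈ Set.Ioc (0:ℝ) 1)
    (hT0 : ∀ t, T 0 t = (1 - σ) * (1 - φ t) + σ * F 0 t)
    (hTi : ∀ i, 1 ≤ i → i ≤ n - 1 → ∀ t, T i t = σ * F i t)
    (hTn : ∀ t, T n t = (1 - σ) * φ t + σ * F n t)
    (hFli : ∀ c : ℕ → ℝ,
      (∀ t ∈ Set.Icc (0:ℝ) 1, ∑ i ∈ Finset.range (n + 1), c i * F i t = 0) →
      ∀ i ≤ n, c i = 0)
    (hF00 : F 0 0 = 1) (hF0i : ∀ i, 1 ≤ i → i ≤ n → F i 0 = 0)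
    (hFn1 : F n 1 = 1) (hF1i : ∀ i, i ≤ n - 1 → F i 1 = 0)
    (hφ0 : φ 0 = 0) (hφ1 : φ 1 = 1) :
    ∀ c : ℕ → ℝ,
      (∀ t ∈ Set.Icc (0:ℝ) 1, ∑ i ∈ Finset.range (n + 1), c i * T i t = 0) →
      ∀ i ≤ n, c i = 0 := by
  obtain ⟨hσ0, hσ1⟩ := hσ
  intro c hc
  -- values of T at 0
  have hT00 : T 0 0 = 1 := by rw [hT0, hφ0, hF00]; ring
  have hTi0 : ∀ i, 1 ≤ i → i ≤ n → T i 0 = 0 := by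
    intro i h1 h2
    rcases eq_or_lt_of_le h2 with rfl | hlt
    · rw [hTn, hφ0, hF0i i h1 le_rfl]; ring
    · rw [hTi i h1 (by omega), hF0i i h1 h2]; ring
  -- values of T at 1
  have hTn1 : T n 1 = 1 := by rw [hTn, hφ1, hFn1]; ring
  have hTi1 : ∀ i, i ≤ n - 1 → T i 1 = 0 := by
    intro i h2
    rcases Nat.eq_zero_or_pos i with rfl | h1
    · rw [hT0, hφ1, hF1i 0 h2]; ring
    · rw [hTi i h1 h2, hF1i i h2]; ring
  have hc0 : c 0 = 0 := by
    have h0 := hc 0 (by constructor <;> norm_num)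
    rw [Finset.sum_eq_single 0] at h0
    · rwa [hT00, mul_one] at h0
    · intro i hi hne
      rw [hTi0 i (by omega) (by simp at hi; omega), mul_zero]
    · intro h; simp at h
  have hcn : c n = 0 := by
    have h1 := hc 1 (by constructor <;> norm_num)
    rw [Finset.sum_eq_single n] at h1
    · rwa [hTn1, mul_one] at h1
    · intro i hi hne
      rw [hTi1 i (by simp at hi; omega), mul_zero]
    · intro h; simp at h
  apply hFli
  intro t ht
  have key : ∑ i ∈ Finset.range (n + 1), c i * T i t
      = σ * ∑ i ∈ Finset.range (n + 1), c i * F i t := by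
    rw [Finset.mul_sum]
    apply Finset.sum_congr rfl
    intro i hi
    simp only [Finset.mem_range] at hi
    rcases Nat.eq_zero_or_pos i with rfl | h1
    · rw [hc0]; ring
    · rcases eq_or_lt_of_le (Nat.lt_succ_iff.mp hi) with rfl | hlt
      · rw [hcn]; ring
      · rw [hTi i h1 (by omega)]; ring
  have := hc t ht
  rw [key] at this
  exact (mul_eq_zero.mp this).resolve_left (ne_of_gt hσ0)
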